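/- Let s ≥ 2 be an integer and let g : ℝ → ℝ satisfy: for every admissible digit sequence a, g(∑_{n=0}^∞ a n / s^{n+1}) = ∑_{n=0}^∞ (−1)^{n+1} a n / s^{n+1}. Then g is continuous at every s-adic irrational point of [0,1) relative to [0,1): for every x ∈ [0,1) such that s^n · x ∉ ℤ for all n ∈ ℕ, g is ContinuousWithinAt on [0,1) at x. (Paper's Theorem 1, continuity part, for the function f₊.) -/

import Mathlib

open Finset

/-- the `n`-th digit of `y` in base `s`. -/
noncomputable def dig12 (s : ℕ) (y : ℝ) (n : ℕ) : ℕ :=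
  (⌊(s:ℝ)^(n+1) * y⌋ - (s:ℤ) * ⌊(s:ℝ)^n * y⌋).toNat

lemma dig12_bounds (s : ℕ) (hs : 2 ≤ s) (y : ℝ) (n : ℕ) :
    (s:ℤ) * ⌊(s:ℝ)^n * y⌋ ≤ ⌊(s:ℝ)^(n+1) * y⌋ ∧
    ⌊(s:ℝ)^(n+1) * y⌋ ≤ (s:ℤ) * ⌊(s:ℝ)^n * y⌋ + ((s:ℤ) - 1) := by
  have hs0 : (0:ℝ) < s := by positivity
  have h1 : ((⌊(s:ℝ)^n * y⌋ : ℤ) : ℝ) ≤ (s:ℝ)^n * y := Int.floor_le _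
  have h2 : (s:ℝ)^n * y < (⌊(s:ℝ)^n * y⌋ : ℤ) + 1 := Int.lt_floor_add_one _
  constructor
  · rw [Int.le_floor]
    push_cast
    calc (s:ℝ) * ⌊(s:ℝ)^n * y⌋ ≤ (s:ℝ) * ((s:ℝ)^n * y) := by
          exact mul_le_mul_of_nonneg_left h1 (le_of_lt hs0)
      _ = (s:ℝ)^(n+1) * y := by ring
  · have : ⌊(s:ℝ)^(n+1) * y⌋ < (s:ℤ) * ⌊(s:ℝ)^n * y⌋ + (s:ℤ) := by
      rw [Int.floor_lt]
      push_cast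
      calc (s:ℝ)^(n+1) * y = (s:ℝ) * ((s:ℝ)^n * y) := by ring
        _ < (s:ℝ) * ((⌊(s:ℝ)^n * y⌋ : ℤ) + 1) := by
            exact mul_lt_mul_of_pos_left h2 hs0
        _ = (s:ℝ) * ⌊(s:ℝ)^n * y⌋ + (s:ℝ) := by ring
    omega

lemma dig12_cast (s : ℕ) (hs : 2 ≤ s) (y : ℝ) (n : ℕ) :
    ((dig12 s y n : ℤ)) = ⌊(s:ℝ)^(n+1) * y⌋ - (s:ℤ) * ⌊(s:ℝ)^n * y⌋ := by
  have h := (dig12_bounds s hs y n).1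
  unfold dig12
  omega

lemma dig12_le (s : ℕ) (hs : 2 ≤ s) (y : ℝ) (n : ℕ) : dig12 s y n ≤ s - 1 := by
  have h1 := (dig12_bounds s hs y n).1
  have h2 := (dig12_bounds s hs y n).2
  unfold dig12
  omega

lemma dig12_cast_le (s : ℕ) (hs : 2 ≤ s) (y : ℝ) (n : ℕ) :
    (dig12 s y n : ℝ) ≤ (s:ℝ) - 1 := by
  have h := dig12_le s hs y n
  have : (dig12 s y n : ℝ) ≤ ((s - 1 : ℕ) : ℝ) := by exact_mod_cast h
  rw [Nat.cast_sub (by omega : 1 ≤ s)] at this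
  simpa using this

lemma dig12_partial (s : ℕ) (hs : 2 ≤ s) (y : ℝ) (hy : y ∈ Set.Ico (0:ℝ) 1) (N : ℕ) :
    ∑ k ∈ range N, (dig12 s y k : ℝ) / (s:ℝ)^(k+1) = (⌊(s:ℝ)^N * y⌋ : ℤ) / (s:ℝ)^N := by
  induction N with
  | zero =>
    simp only [range_zero, Finset.sum_empty, pow_zero, one_mul]
    rw [show ⌊y⌋ = 0 from Int.floor_eq_zero_iff.2 (by simpa using hy)]
    simp
  | succ N ih =>
    rw [Finset.sum_range_succ, ih]
    have hc : ((dig12 s y N : ℤ) : ℝ) = (⌊(s:ℝ)^(N+1) * y⌋ : ℤ) - (s:ℝ) * (⌊(s:ℝ)^N * y⌋ : ℤ) := by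
      rw [dig12_cast s hs y N]; push_cast; ring
    have hcn : ((dig12 s y N : ℝ)) = (⌊(s:ℝ)^(N+1) * y⌋ : ℤ) - (s:ℝ) * (⌊(s:ℝ)^N * y⌋ : ℤ) := by
      exact_mod_cast hc
    rw [hcn]
    have hs0 : (0:ℝ) < s := by positivity
    have h1 : (s:ℝ)^N ≠ 0 := by positivity
    have h2 : (s:ℝ)^(N+1) ≠ 0 := by positivity
    field_simp
    ring

lemma dig12_hasSum (s : ℕ) (hs : 2 ≤ s) (y : ℝ) (hy : y ∈ Set.Ico (0:ℝ) 1) :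
    HasSum (fun n => (dig12 s y n : ℝ) / (s:ℝ)^(n+1)) y := by
  have hs0 : (0:ℝ) < s := by positivity
  rw [hasSum_iff_tendsto_nat_of_nonneg (fun i => by positivity)]
  have key : ∀ N : ℕ, |(∑ i ∈ range N, (dig12 s y i : ℝ) / (s:ℝ)^(i+1)) - y| ≤ (1/(s:ℝ))^N := by
    intro N
    rw [dig12_partial s hs y hy N]
    have h1 : ((⌊(s:ℝ)^N * y⌋ : ℤ) : ℝ) ≤ (s:ℝ)^N * y := Int.floor_le _
    have h2 : (s:ℝ)^N * y < (⌊(s:ℝ)^N * y⌋ : ℤ) + 1 := Int.lt_floor_add_one _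
    have hp : (0:ℝ) < (s:ℝ)^N := by positivity
    have hq : (1/(s:ℝ))^N = 1/(s:ℝ)^N := by rw [div_pow, one_pow]
    have e1 : ((⌊(s:ℝ)^N * y⌋ : ℤ) : ℝ)/(s:ℝ)^N ≤ y := by
      rw [div_le_iff₀ hp]; nlinarith
    have e2 : y ≤ ((⌊(s:ℝ)^N * y⌋ : ℤ) : ℝ)/(s:ℝ)^N + 1/(s:ℝ)^N := by
      rw [← add_div, le_div_iff₀ hp]; nlinarith
    rw [hq, abs_le]
    constructor <;> linarith
  rw [Metric.tendsto_atTop]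
  intro ε hε
  have hlim : Filter.Tendsto (fun N : ℕ => (1/(s:ℝ))^N) Filter.atTop (nhds 0) := by
    apply tendsto_pow_atTop_nhds_zero_of_lt_one (by positivity)
    rw [div_lt_one hs0]; exact_mod_cast (by omega : 1 < s)
  rw [Metric.tendsto_atTop] at hlim
  obtain ⟨M, hM⟩ := hlim ε hε
  refine ⟨M, fun n hn => ?_⟩
  have := hM n hn
  rw [Real.dist_eq] at this ⊢
  have hk := key n
  have hp : (0:ℝ) ≤ (1/(s:ℝ))^n := by positivity
  rw [sub_zero, abs_of_nonneg hp] at this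
  linarith [abs_le.1 hk]

lemma geom_summable12 (s : ℕ) (hs : 2 ≤ s) (c : ℝ) (M : ℕ) :
    Summable (fun n : ℕ => c / (s:ℝ)^(n+M)) := by
  have hs0 : (0:ℝ) < s := by positivity
  have heq : ∀ n : ℕ, c / (s:ℝ)^(n+M) = (c/(s:ℝ)^M) * (1/(s:ℝ))^n := by
    intro n
    rw [div_pow, one_pow, div_mul_div_comm, mul_one, ← pow_add,
      show M + n = n + M from by omega]
  simp only [heq]
  exact Summable.mul_left _ (summable_geometric_of_lt_one (by positivity)
    (by rw [div_lt_one hs0]; exact_mod_cast (by omega : 1 < s)))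

lemma tail_geom12 (s : ℕ) (hs : 2 ≤ s) (N : ℕ) :
    ∑' n : ℕ, ((s:ℝ) - 1) / (s:ℝ)^(n+N+1) = 1/(s:ℝ)^N := by
  have hs0 : (0:ℝ) < s := by positivity
  have hs1 : (1:ℝ) < s := by exact_mod_cast (by omega : 1 < s)
  have hne : (s:ℝ) - 1 ≠ 0 := by linarith
  have heq : ∀ n : ℕ, ((s:ℝ) - 1) / (s:ℝ)^(n+N+1) = (((s:ℝ)-1)/(s:ℝ)^(N+1)) * (1/(s:ℝ))^n := by
    intro n
    rw [div_pow, one_pow, div_mul_div_comm, mul_one, ← pow_add,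
      show N + 1 + n = n + N + 1 from by omega]
  rw [tsum_congr heq, tsum_mul_left,
    tsum_geometric_of_lt_one (by positivity) (by rw [div_lt_one hs0]; exact hs1)]
  have h1 : (1:ℝ) - 1/(s:ℝ) = ((s:ℝ) - 1)/(s:ℝ) := by field_simp
  rw [h1, inv_div, pow_succ]
  field_simp

lemma dig12_admissible (s : ℕ) (hs : 2 ≤ s) (y : ℝ) (hy : y ∈ Set.Ico (0:ℝ) 1) :
    ¬ ∃ N, ∀ n ≥ N, dig12 s y n = s - 1 := by
  have hs0 : (0:ℝ) < s := by positivity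
  rintro ⟨N, hN⟩
  have hsum := dig12_hasSum s hs y hy
  have hsumm := hsum.summable
  have htail := Summable.sum_add_tsum_nat_add N hsumm
  rw [hsum.tsum_eq, dig12_partial s hs y hy N] at htail
  have hdig : ∀ n : ℕ, (dig12 s y (n + N) : ℝ) = (s:ℝ) - 1 := by
    intro n
    rw [hN (n + N) (Nat.le_add_left N n)]
    push_cast [Nat.cast_sub (by omega : 1 ≤ s)]
    ring
  have heq : (∑' n : ℕ, (dig12 s y (n + N) : ℝ) / (s:ℝ)^(n + N + 1))
      = ∑' n : ℕ, ((s:ℝ) - 1) / (s:ℝ)^(n+N+1) := tsum_congr (fun n => by rw [hdig n])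
  rw [heq, tail_geom12 s hs N] at htail
  have h2 : (s:ℝ)^N * y < (⌊(s:ℝ)^N * y⌋ : ℤ) + 1 := Int.lt_floor_add_one _
  have hp : (0:ℝ) < (s:ℝ)^N := by positivity
  rw [← add_div] at htail
  rw [div_eq_iff (ne_of_gt hp)] at htail
  nlinarith [htail, h2]

lemma dig12_summable_nega (s : ℕ) (hs : 2 ≤ s) (y : ℝ) :
    Summable (fun n : ℕ => (-1:ℝ)^(n+1) * (dig12 s y n : ℝ) / (s:ℝ)^(n+1)) := by
  have hs0 : (0:ℝ) < s := by positivity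
  apply Summable.of_norm
  apply Summable.of_nonneg_of_le (fun n => norm_nonneg _) _ (geom_summable12 s hs ((s:ℝ)-1) 1)
  intro n
  rw [Real.norm_eq_abs, abs_div, abs_mul, abs_pow, abs_neg, abs_one, one_pow, one_mul,
    abs_of_nonneg (by positivity : (0:ℝ) ≤ (dig12 s y n : ℝ)),
    abs_of_nonneg (by positivity : (0:ℝ) ≤ (s:ℝ)^(n+1))]
  gcongr
  exact dig12_cast_le s hs y n

/-- Paper's Theorem 1, continuity part, for the function `f₊`: `f₊` is
continuous (within `[0,1)`) at every s-adic irrational point of `[0,1)`. -/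
theorem stmt_12 (s : ℕ) (hs : 2 ≤ s) (g : ℝ → ℝ)
    (hg : ∀ a : ℕ → ℕ, (∀ n, a n ≤ s - 1) → (¬ ∃ N, ∀ n ≥ N, a n = s - 1) →
      g (∑' n : ℕ, (a n : ℝ) / (s : ℝ) ^ (n + 1)) =
        ∑' n : ℕ, (-1 : ℝ) ^ (n + 1) * (a n : ℝ) / (s : ℝ) ^ (n + 1)) :
    ∀ x ∈ Set.Ico (0 : ℝ) 1, (∀ n : ℕ, ¬ ∃ m : ℤ, (s : ℝ) ^ n * x = (m : ℝ)) →
      ContinuousWithinAt g (Set.Ico 0 1) x := by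
  intro x hx hirr
  have hs0 : (0:ℝ) < s := by positivity
  have hs1 : (1:ℝ) < s := by exact_mod_cast (by omega : 1 < s)
  have hgval : ∀ y ∈ Set.Ico (0:ℝ) 1,
      g y = ∑' n : ℕ, (-1:ℝ)^(n+1) * (dig12 s y n : ℝ) / (s:ℝ)^(n+1) := by
    intro y hy
    have := hg (dig12 s y) (dig12_le s hs y) (dig12_admissible s hs y hy)
    rwa [(dig12_hasSum s hs y hy).tsum_eq] at this
  rw [Metric.continuousWithinAt_iff]
  intro ε hε
  obtain ⟨N, hN⟩ : ∃ N : ℕ, 2/(s:ℝ)^N < ε := by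
    have hlim : Filter.Tendsto (fun N : ℕ => 2 * (1/(s:ℝ))^N) Filter.atTop (nhds 0) := by
      rw [show (0:ℝ) = 2 * 0 by ring]
      exact (tendsto_pow_atTop_nhds_zero_of_lt_one (by positivity)
        (by rw [div_lt_one hs0]; exact hs1)).const_mul 2
    obtain ⟨N, hN⟩ := (Metric.tendsto_atTop.1 hlim) ε hε
    refine ⟨N, ?_⟩
    have := hN N le_rfl
    rw [Real.dist_eq, sub_zero, abs_of_nonneg (by positivity)] at this
    calc 2/(s:ℝ)^N = 2 * (1/(s:ℝ))^N := by rw [div_pow, one_pow]; ring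
      _ < ε := this
  have hfloor : ∀ k : ℕ, ∃ δ > 0, ∀ y : ℝ, |y - x| < δ → ⌊(s:ℝ)^k * y⌋ = ⌊(s:ℝ)^k * x⌋ := by
    intro k
    have hpk : (0:ℝ) < (s:ℝ)^k := by positivity
    have h1 : ((⌊(s:ℝ)^k * x⌋ : ℤ) : ℝ) < (s:ℝ)^k * x := by
      rcases lt_or_eq_of_le (Int.floor_le ((s:ℝ)^k * x)) with h | h
      · exact h
      · exact absurd ⟨⌊(s:ℝ)^k * x⌋, h.symm⟩ (hirr k)
    have h2 : (s:ℝ)^k * x < (⌊(s:ℝ)^k * x⌋ : ℤ) + 1 := Int.lt_floor_add_one _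
    set m : ℝ := ((⌊(s:ℝ)^k * x⌋ : ℤ) : ℝ) with hm
    have hmin : 0 < min ((s:ℝ)^k * x - m) ((m + 1) - (s:ℝ)^k * x) :=
      lt_min (by linarith) (by linarith)
    refine ⟨min ((s:ℝ)^k * x - m) ((m + 1) - (s:ℝ)^k * x) / (s:ℝ)^k,
      div_pos hmin hpk, fun y hy => ?_⟩
    have hy1 : |(s:ℝ)^k * y - (s:ℝ)^k * x| <
        min ((s:ℝ)^k * x - m) ((m + 1) - (s:ℝ)^k * x) := by
      rw [← mul_sub, abs_mul, abs_of_nonneg (le_of_lt hpk)]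
      calc (s:ℝ)^k * |y - x|
          < (s:ℝ)^k * (min ((s:ℝ)^k * x - m) ((m + 1) - (s:ℝ)^k * x) / (s:ℝ)^k) :=
            mul_lt_mul_of_pos_left hy hpk
        _ = _ := by field_simp
    rw [abs_lt, lt_min_iff] at hy1
    obtain ⟨hneg, ha, hb⟩ := hy1
    have hminle := min_le_left ((s:ℝ)^k * x - m) ((m + 1) - (s:ℝ)^k * x)
    apply Int.floor_eq_iff.2
    constructor
    · show m ≤ (s:ℝ)^k * y
      linarith
    · push_cast
      show (s:ℝ)^k * y < m + 1
      linarith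
  have hδ : ∃ δ > 0, ∀ y : ℝ, |y - x| < δ → ∀ k ≤ N + 1, ⌊(s:ℝ)^k * y⌋ = ⌊(s:ℝ)^k * x⌋ := by
    classical
    choose δf hδf hfl using hfloor
    refine ⟨(Finset.range (N+2)).inf' (by simp) δf, ?_, ?_⟩
    · exact (Finset.lt_inf'_iff _).2 fun k _ => hδf k
    · intro y hy k hk
      exact hfl k y (lt_of_lt_of_le hy (Finset.inf'_le _ (by simp; omega)))
  obtain ⟨δ, hδpos, hδfloor⟩ := hδ
  refine ⟨δ, hδpos, fun y hy hdy => ?_⟩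
  rw [Real.dist_eq] at hdy ⊢
  rw [hgval y hy, hgval x hx]
  have hdig_eq : ∀ n ≤ N, dig12 s y n = dig12 s x n := by
    intro n hn
    have e1 := hδfloor y hdy n (by omega)
    have e2 := hδfloor y hdy (n+1) (by omega)
    unfold dig12
    rw [e1, e2]
  set F := fun n : ℕ => (-1:ℝ)^(n+1) * (dig12 s y n : ℝ) / (s:ℝ)^(n+1) -
    (-1:ℝ)^(n+1) * (dig12 s x n : ℝ) / (s:ℝ)^(n+1) with hF
  have hsy := dig12_summable_nega s hs y
  have hsx := dig12_summable_nega s hs x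
  have hdiff : (∑' n : ℕ, (-1:ℝ)^(n+1) * (dig12 s y n : ℝ) / (s:ℝ)^(n+1)) -
      (∑' n : ℕ, (-1:ℝ)^(n+1) * (dig12 s x n : ℝ) / (s:ℝ)^(n+1)) = ∑' n : ℕ, F n := by
    exact (Summable.tsum_sub hsy hsx).symm
  rw [hdiff]
  have hFsumm : Summable F := hsy.sub hsx
  have hsplit := Summable.sum_add_tsum_nat_add (N+1) hFsumm
  have hzero : ∑ i ∈ range (N+1), F i = 0 := by
    apply Finset.sum_eq_zero
    intro i hi
    rw [Finset.mem_range] at hi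
    simp only [hF]
    rw [hdig_eq i (by omega)]
    ring
  rw [hzero, zero_add] at hsplit
  rw [← hsplit]
  have hle : ∀ (w : ℝ) (n : ℕ),
      |(-1:ℝ)^(n+(N+1)+1) * (dig12 s w (n+(N+1)) : ℝ) / (s:ℝ)^(n+(N+1)+1)|
        ≤ ((s:ℝ)-1)/(s:ℝ)^(n+(N+2)) := by
    intro w n
    rw [abs_div, abs_mul, abs_pow, abs_neg, abs_one, one_pow, one_mul,
      abs_of_nonneg (by positivity : (0:ℝ) ≤ (dig12 s w (n+(N+1)) : ℝ)),
      abs_of_nonneg (by positivity : (0:ℝ) ≤ (s:ℝ)^(n+(N+1)+1)),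
      show n+(N+1)+1 = n+(N+2) from by omega]
    gcongr
    exact dig12_cast_le s hs w _
  have hbound : ∀ n : ℕ, |F (n + (N+1))| ≤ 2 * (((s:ℝ)-1) / (s:ℝ)^(n+(N+2))) := by
    intro n
    simp only [hF]
    calc |(-1:ℝ)^(n+(N+1)+1) * (dig12 s y (n+(N+1)) : ℝ) / (s:ℝ)^(n+(N+1)+1) -
        (-1:ℝ)^(n+(N+1)+1) * (dig12 s x (n+(N+1)) : ℝ) / (s:ℝ)^(n+(N+1)+1)|
        ≤ |(-1:ℝ)^(n+(N+1)+1) * (dig12 s y (n+(N+1)) : ℝ) / (s:ℝ)^(n+(N+1)+1)| +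
          |(-1:ℝ)^(n+(N+1)+1) * (dig12 s x (n+(N+1)) : ℝ) / (s:ℝ)^(n+(N+1)+1)| := abs_sub _ _
      _ ≤ ((s:ℝ)-1)/(s:ℝ)^(n+(N+2)) + ((s:ℝ)-1)/(s:ℝ)^(n+(N+2)) := by
          exact add_le_add (hle y n) (hle x n)
      _ = 2 * (((s:ℝ)-1) / (s:ℝ)^(n+(N+2))) := by ring
  have hgeom : Summable (fun n : ℕ => 2 * (((s:ℝ)-1) / (s:ℝ)^(n+(N+2)))) :=
    (geom_summable12 s hs ((s:ℝ)-1) (N+2)).mul_left 2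
  have hFtail : Summable (fun n : ℕ => F (n + (N+1))) := (summable_nat_add_iff (N+1)).2 hFsumm
  have habs : |∑' n : ℕ, F (n + (N+1))| ≤ ∑' n : ℕ, 2 * (((s:ℝ)-1) / (s:ℝ)^(n+(N+2))) := by
    calc |∑' n : ℕ, F (n + (N+1))|
          = ‖∑' n : ℕ, F (n + (N+1))‖ := (Real.norm_eq_abs _).symm
      _ ≤ ∑' n : ℕ, ‖F (n + (N+1))‖ :=
          norm_tsum_le_tsum_norm (by simpa [Real.norm_eq_abs] using hFtail.abs)
      _ ≤ _ := by
          apply Summable.tsum_le_tsum _ (by simpa [Real.norm_eq_abs] using hFtail.abs) hgeom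
          intro n
          simpa [Real.norm_eq_abs] using hbound n
  have hval : ∑' n : ℕ, 2 * (((s:ℝ)-1) / (s:ℝ)^(n+(N+2))) = 2/(s:ℝ)^(N+1) := by
    rw [tsum_mul_left]
    have h1 : (∑' n : ℕ, ((s:ℝ)-1) / (s:ℝ)^(n+(N+2))) = 1/(s:ℝ)^(N+1) := by
      rw [show (fun n : ℕ => ((s:ℝ)-1) / (s:ℝ)^(n+(N+2)))
          = fun n : ℕ => ((s:ℝ)-1) / (s:ℝ)^(n+(N+1)+1) from funext fun n => by
            rw [show n+(N+2) = n+(N+1)+1 from by omega]]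
      exact tail_geom12 s hs (N+1)
    rw [h1]
    ring
  rw [hval] at habs
  calc |∑' n : ℕ, F (n + (N+1))| ≤ 2/(s:ℝ)^(N+1) := habs
    _ ≤ 2/(s:ℝ)^N := by
        apply div_le_div_of_nonneg_left (by norm_num) (by positivity)
        exact pow_le_pow_right₀ (le_of_lt hs1) (by omega)
    _ < ε := hN
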